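/- Let d ≥ 3 be an integer divisible by 3. There do not exist integers a₁, a₂, a₃, b₁, b₂, b₃, c₁, c₂, c₃ satisfying simultaneously the six congruences: a₁ + a₂ + a₃ ≡ 0 (mod d), c₁ + a₂ + b₃ + 1 ≡ 0 (mod d), c₁ + b₂ + a₃ + 1 ≡ 0 (mod d), b₁ + b₂ + b₃ + 1 ≡ 0 (mod d), b₁ + c₂ + a₃ + 1 ≡ 0 (mod d), and a₁ + c₂ + b₃ + 1 ≡ 0 (mod d). -/

import Mathlib

/-- For `d ≥ 3` divisible by `3`, the six delta-function constraints forming a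
closed loop in the `(3,3,d)` generic Bell inequality cannot all be satisfied
simultaneously. -/
theorem no_solution_six_loop_congruences_three_settings
    (d : ℤ) (hd3 : 3 ∣ d) (hd : 3 ≤ d) :
    ¬ ∃ a₁ a₂ a₃ b₁ b₂ b₃ c₁ c₂ c₃ : ℤ,
        a₁ + a₂ + a₃ ≡ 0 [ZMOD d] ∧
        c₁ + a₂ + b₃ + 1 ≡ 0 [ZMOD d] ∧
        c₁ + b₂ + a₃ + 1 ≡ 0 [ZMOD d] ∧
        b₁ + b₂ + b₃ + 1 ≡ 0 [ZMOD d] ∧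
        b₁ + c₂ + a₃ + 1 ≡ 0 [ZMOD d] ∧
        a₁ + c₂ + b₃ + 1 ≡ 0 [ZMOD d] := by
  rintro ⟨a₁, a₂, a₃, b₁, b₂, b₃, c₁, c₂, c₃, h1, h2, h3, h4, h5, h6⟩
  have d1 : d ∣ a₁ + a₂ + a₃ := Int.modEq_zero_iff_dvd.mp h1
  have d2 : d ∣ c₁ + a₂ + b₃ + 1 := Int.modEq_zero_iff_dvd.mp h2
  have d3 : d ∣ c₁ + b₂ + a₃ + 1 := Int.modEq_zero_iff_dvd.mp h3
  have d4 : d ∣ b₁ + b₂ + b₃ + 1 := Int.modEq_zero_iff_dvd.mp h4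
  have d5 : d ∣ b₁ + c₂ + a₃ + 1 := Int.modEq_zero_iff_dvd.mp h5
  have d6 : d ∣ a₁ + c₂ + b₃ + 1 := Int.modEq_zero_iff_dvd.mp h6
  have key : d ∣ 3 * a₃ - 3 * b₃ - 1 := by
    have := (((((d1.sub d2).add d3).sub d4).add d5).sub d6)
    have e : 3 * a₃ - 3 * b₃ - 1 = a₁ + a₂ + a₃ - (c₁ + a₂ + b₃ + 1) + (c₁ + b₂ + a₃ + 1) - (b₁ + b₂ + b₃ + 1) + (b₁ + c₂ + a₃ + 1) - (a₁ + c₂ + b₃ + 1) := by ring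
    rw [e]
    exact this
  have h3d : (3 : ℤ) ∣ 3 * a₃ - 3 * b₃ - 1 := dvd_trans hd3 key
  omega
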